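/- Let T be the block-diagonal idempotent on ℓ² built from blocks [[1, −1/n],[0,0]], n ∈ ℕ, and A = TT* + T*T − T − T* − I. Then A does not attain its norm, and ‖A‖ = 1. -/

import Mathlib

open ContinuousLinearMap in
private theorem buckholtz_aux_adj
    (T : lp (fun _ : ℕ => EuclideanSpace ℂ (Fin 2)) 2 →L[ℂ]
          lp (fun _ : ℕ => EuclideanSpace ℂ (Fin 2)) 2)
    (hT : ∀ (x : lp (fun _ : ℕ => EuclideanSpace ℂ (Fin 2)) 2) (n : ℕ),
      (T x) n 0 = x n 0 - ((1 : ℂ) / (n + 1)) * x n 1 ∧ (T x) n 1 = 0) :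
    ∀ (y : lp (fun _ : ℕ => EuclideanSpace ℂ (Fin 2)) 2) (n : ℕ),
      (adjoint T y) n 0 = y n 0 ∧ (adjoint T y) n 1 = -((1 : ℂ) / (n + 1)) * y n 0 := by
  intro y n
  have key : ∀ i : Fin 2, (starRingEnd ℂ) ((adjoint T y) n i)
      = (starRingEnd ℂ) (y n 0) * ((EuclideanSpace.single i (1:ℂ)) 0
          - ((1:ℂ)/(n+1)) * (EuclideanSpace.single i (1:ℂ)) 1) := by
    intro i
    have hz : ∀ m, m ≠ n →
        (T ((lp.single 2 n (EuclideanSpace.single i (1:ℂ))) :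
          lp (fun _ : ℕ => EuclideanSpace ℂ (Fin 2)) 2)) m = 0 := by
      intro m hm
      set s : lp (fun _ : ℕ => EuclideanSpace ℂ (Fin 2)) 2 :=
        lp.single 2 n (EuclideanSpace.single i (1:ℂ)) with hs
      have hsm : (s : ∀ _ : ℕ, EuclideanSpace ℂ (Fin 2)) m = 0 := by
        rw [hs]; exact lp.single_apply_ne 2 n _ hm
      refine PiLp.ext (fun j => ?_)
      fin_cases j
      · have := (hT s m).1
        rw [hsm] at this
        simpa using this
      · simpa using (hT s m).2
    set s : lp (fun _ : ℕ => EuclideanSpace ℂ (Fin 2)) 2 :=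
      lp.single 2 n (EuclideanSpace.single i (1:ℂ)) with hs
    have h1 : (inner ℂ ((adjoint T y) n) (EuclideanSpace.single i (1:ℂ)) : ℂ)
        = (starRingEnd ℂ) ((adjoint T y) n i) := by
      rw [EuclideanSpace.inner_single_right, one_mul]
    have h2 : (inner ℂ (adjoint T y) s : ℂ)
        = inner ℂ ((adjoint T y) n) (EuclideanSpace.single i (1:ℂ)) := by
      rw [hs]; exact lp.inner_single_right n _ _
    have h3 : (inner ℂ (adjoint T y) s : ℂ) = inner ℂ y (T s) := adjoint_inner_left T s y
    have h4 : (inner ℂ y (T s) : ℂ) = inner ℂ (y n) ((T s) n) := by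
      rw [lp.inner_eq_tsum]
      exact tsum_eq_single n (fun m hm => by rw [hz m hm, inner_zero_right])
    have h5 : (inner ℂ (y n) ((T s) n) : ℂ)
        = (starRingEnd ℂ) (y n 0) * ((T s) n 0) + (starRingEnd ℂ) (y n 1) * ((T s) n 1) := by
      rw [PiLp.inner_apply]
      simp [Fin.sum_univ_two, RCLike.inner_apply]
      ring
    have hsn : (s : ∀ _ : ℕ, EuclideanSpace ℂ (Fin 2)) n = EuclideanSpace.single i (1:ℂ) := by
      rw [hs]; exact lp.single_apply_self 2 n _
    rw [h1] at h2
    rw [h2.symm.trans h3, h4, h5, (hT s n).1, (hT s n).2, hsn]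
    ring
  have hc : (starRingEnd ℂ) ((1:ℂ)/(n+1)) = (1:ℂ)/(n+1) := by
    simp [map_div₀]
  constructor
  · have := key 0
    simp [EuclideanSpace.single_apply] at this
    exact (starRingEnd ℂ).injective (by simpa using this)
  · have := key 1
    simp [EuclideanSpace.single_apply] at this
    apply (starRingEnd ℂ).injective
    rw [this, map_mul, map_neg, hc]
    ring

open ContinuousLinearMap in
private theorem buckholtz_aux_An
    (T : lp (fun _ : ℕ => EuclideanSpace ℂ (Fin 2)) 2 →L[ℂ]
          lp (fun _ : ℕ => EuclideanSpace ℂ (Fin 2)) 2)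
    (hT : ∀ (x : lp (fun _ : ℕ => EuclideanSpace ℂ (Fin 2)) 2) (n : ℕ),
      (T x) n 0 = x n 0 - ((1 : ℂ) / (n + 1)) * x n 1 ∧ (T x) n 1 = 0)
    (hadj : ∀ (y : lp (fun _ : ℕ => EuclideanSpace ℂ (Fin 2)) 2) (n : ℕ),
      (adjoint T y) n 0 = y n 0 ∧ (adjoint T y) n 1 = -((1 : ℂ) / (n + 1)) * y n 0)
    (A : lp (fun _ : ℕ => EuclideanSpace ℂ (Fin 2)) 2 →L[ℂ]
          lp (fun _ : ℕ => EuclideanSpace ℂ (Fin 2)) 2)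
    (hA : A = T * adjoint T + adjoint T * T - T - adjoint T - 1) :
    ∀ (x : lp (fun _ : ℕ => EuclideanSpace ℂ (Fin 2)) 2) (n : ℕ),
      (A x) n = (((1:ℂ)/(n+1))^2 - 1) • x n := by
  intro x n
  have happ : ∀ i : Fin 2, (A x) n i
      = (T (adjoint T x)) n i + (adjoint T (T x)) n i - (T x) n i - (adjoint T x) n i
        - x n i := by
    intro i
    rw [hA]
    simp only [ContinuousLinearMap.sub_apply, ContinuousLinearMap.add_apply,
      ContinuousLinearMap.mul_apply, ContinuousLinearMap.one_apply,
      lp.coeFn_sub, lp.coeFn_add, Pi.sub_apply, Pi.add_apply]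
    rfl
  refine PiLp.ext (fun i => ?_)
  fin_cases i
  · show (A x) n 0 = (((1:ℂ)/(n+1))^2 - 1) * x n 0
    rw [happ 0, (hT (adjoint T x) n).1, (hadj x n).1, (hadj x n).2,
      (hadj (T x) n).1, (hT x n).1]
    ring
  · show (A x) n 1 = (((1:ℂ)/(n+1))^2 - 1) * x n 1
    rw [happ 1, (hT (adjoint T x) n).2, (hadj (T x) n).2, (hT x n).1, (hT x n).2,
      (hadj x n).2]
    ring

open ContinuousLinearMap in
private theorem buckholtz_aux_main
    (A : lp (fun _ : ℕ => EuclideanSpace ℂ (Fin 2)) 2 →L[ℂ]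
          lp (fun _ : ℕ => EuclideanSpace ℂ (Fin 2)) 2)
    (hAn : ∀ (x : lp (fun _ : ℕ => EuclideanSpace ℂ (Fin 2)) 2) (n : ℕ),
      (A x) n = (((1:ℂ)/(n+1))^2 - 1) • x n) :
    (¬ ∃ x, ‖x‖ = 1 ∧ ‖A x‖ = ‖A‖) ∧ ‖A‖ = 1 := by
  have hp : 0 < (2:ENNReal).toReal := by norm_num
  have hfacs : ∀ n : ℕ, 0 < (1/((n:ℝ)+1))^2 ∧ (1/((n:ℝ)+1))^2 ≤ 1 := by
    intro n
    have hn1 : (1:ℝ) ≤ (n:ℝ)+1 := by have := Nat.cast_nonneg (α := ℝ) n; linarith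
    refine ⟨by positivity, ?_⟩
    have h1 : 1/((n:ℝ)+1) ≤ 1 := by rw [div_le_one (by linarith)]; linarith
    exact pow_le_one₀ (by positivity) h1
  have hcnorm : ∀ n : ℕ, ‖(((1:ℂ)/(n+1))^2 - 1)‖ = 1 - (1/((n:ℝ)+1))^2 := by
    intro n
    have h1 : (((1:ℂ)/(n+1))^2 - 1) = ((((1/((n:ℝ)+1))^2 - 1 : ℝ)) : ℂ) := by
      push_cast; ring
    rw [h1, Complex.norm_real, Real.norm_eq_abs,
      abs_of_nonpos (by linarith [(hfacs n).2])]
    ring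
  have hfac0 : ∀ n : ℕ, 0 ≤ 1 - (1/((n:ℝ)+1))^2 := fun n => by linarith [(hfacs n).2]
  have hfac1 : ∀ n : ℕ, 1 - (1/((n:ℝ)+1))^2 < 1 := fun n => by linarith [(hfacs n).1]
  have hterm : ∀ w a : ℝ, 0 ≤ w → w ≤ 1 → 0 ≤ a → (w*a)^2 ≤ a^2 := by
    intro w a h0 h1 h2
    have hw : w^2 ≤ 1 := by nlinarith
    calc (w*a)^2 = w^2 * a^2 := by ring
      _ ≤ 1 * a^2 := mul_le_mul_of_nonneg_right hw (sq_nonneg a)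
      _ = a^2 := one_mul _
  have hterm' : ∀ w a : ℝ, 0 ≤ w → w < 1 → 0 < a → (w*a)^2 < a^2 := by
    intro w a h0 h1 h2
    have hw : w^2 < 1 := by nlinarith
    calc (w*a)^2 = w^2 * a^2 := by ring
      _ < 1 * a^2 := mul_lt_mul_of_pos_right hw (by positivity)
      _ = a^2 := one_mul _
  have hAxn : ∀ (x : lp (fun _ : ℕ => EuclideanSpace ℂ (Fin 2)) 2) (n : ℕ),
      ‖(A x) n‖ = (1 - (1/((n:ℝ)+1))^2) * ‖x n‖ := by
    intro x n
    rw [hAn, norm_smul, hcnorm]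
  have hnsq : ∀ (y : lp (fun _ : ℕ => EuclideanSpace ℂ (Fin 2)) 2),
      ‖y‖^2 = ∑' n, ‖y n‖^2 := by
    intro y
    have h1 := lp.norm_rpow_eq_tsum hp y
    simpa [show ((2:ENNReal)).toReal = ((2:ℕ):ℝ) by norm_num,
      Real.rpow_natCast] using h1
  have hsummable : ∀ (y : lp (fun _ : ℕ => EuclideanSpace ℂ (Fin 2)) 2),
      Summable fun n => ‖y n‖^2 := by
    intro y
    have h1 := (lp.memℓp y).summable hp
    simpa [show ((2:ENNReal)).toReal = ((2:ℕ):ℝ) by norm_num, Real.rpow_natCast] using h1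
  have hle : ∀ x, ‖A x‖ ≤ ‖x‖ := by
    intro x
    have hsq : ‖A x‖^2 ≤ ‖x‖^2 := by
      rw [hnsq, hnsq]
      refine Summable.tsum_le_tsum (fun n => ?_) (hsummable (A x)) (hsummable x)
      rw [hAxn]
      exact hterm _ _ (hfac0 n) (by linarith [hfac1 n]) (norm_nonneg _)
    exact (pow_le_pow_iff_left₀ (norm_nonneg _) (norm_nonneg _) two_ne_zero).mp hsq
  have hAle : ‖A‖ ≤ 1 := opNorm_le_bound A zero_le_one fun x => by
    rw [one_mul]; exact hle x
  have hlow : ∀ n : ℕ, 1 - (1/((n:ℝ)+1))^2 ≤ ‖A‖ := by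
    intro n
    set v : lp (fun _ : ℕ => EuclideanSpace ℂ (Fin 2)) 2 :=
      lp.single 2 n (EuclideanSpace.single (0 : Fin 2) (1:ℂ)) with hv
    have hvn : ‖v‖ = 1 := by
      rw [hv, lp.norm_single (E := fun _ : ℕ => EuclideanSpace ℂ (Fin 2)) (by norm_num) n (EuclideanSpace.single (0 : Fin 2) (1:ℂ))]
      simp [EuclideanSpace.norm_single]
    have hvapp : (v : ∀ _ : ℕ, EuclideanSpace ℂ (Fin 2)) n
        = EuclideanSpace.single (0 : Fin 2) (1:ℂ) := by
      rw [hv]; exact lp.single_apply_self 2 n _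
    calc 1 - (1/((n:ℝ)+1))^2 = ‖(A v) n‖ := by
          rw [hAxn, hvapp, EuclideanSpace.norm_single]; simp
      _ ≤ ‖A v‖ := lp.norm_apply_le_norm (by norm_num) (A v) n
      _ ≤ ‖A‖ * ‖v‖ := le_opNorm A v
      _ = ‖A‖ := by rw [hvn, mul_one]
  have hAge : 1 ≤ ‖A‖ := by
    have h1 : Filter.Tendsto (fun n : ℕ => 1/((n:ℝ)+1)) Filter.atTop (nhds 0) :=
      tendsto_one_div_add_atTop_nhds_zero_nat
    have h3 := Filter.Tendsto.sub (tendsto_const_nhds (x := (1:ℝ))) (h1.pow 2)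
    have htend : Filter.Tendsto (fun n : ℕ => 1 - (1/((n:ℝ)+1))^2)
        Filter.atTop (nhds 1) := by simpa using h3
    exact le_of_tendsto' htend hlow
  have hAnorm : ‖A‖ = 1 := le_antisymm hAle hAge
  refine ⟨?_, hAnorm⟩
  rintro ⟨x, hx1, hxA⟩
  rw [hAnorm] at hxA
  have hxne : ∃ n, (x : ∀ _ : ℕ, EuclideanSpace ℂ (Fin 2)) n ≠ 0 := by
    by_contra h
    push_neg at h
    have : x = 0 := lp.ext (funext h)
    rw [this] at hx1
    simp at hx1
  obtain ⟨n, hn⟩ := hxne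
  have hxnpos : 0 < ‖x n‖ := norm_pos_iff.mpr hn
  have hstrict : ‖(A x) n‖^2 < ‖x n‖^2 := by
    rw [hAxn]
    exact hterm' _ _ (hfac0 n) (hfac1 n) hxnpos
  have hlt : ∑' m, ‖(A x) m‖^2 < ∑' m, ‖x m‖^2 := by
    refine Summable.tsum_lt_tsum (fun m => ?_) hstrict (hsummable (A x)) (hsummable x)
    rw [hAxn]
    exact hterm _ _ (hfac0 m) (by linarith [hfac1 m]) (norm_nonneg _)
  rw [← hnsq, ← hnsq, hxA, hx1] at hlt
  exact lt_irrefl _ hlt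

open ContinuousLinearMap in
/-- Let `T` be the block-diagonal idempotent on `ℓ² = ⊕ₙ ℂ²` built from the blocks
`[[1, −1/n],[0,0]]`, `n ≥ 1` (indexed here by `n : ℕ` with `ωₙ = 1/(n+1)`), and let
`A = TT* + T*T − T − T* − I`. Then `A` does not attain its norm, and `‖A‖ = 1`. -/
theorem blockDiag_one_over_n_buckholtz_not_normAttain
    (T : lp (fun _ : ℕ => EuclideanSpace ℂ (Fin 2)) 2 →L[ℂ]
          lp (fun _ : ℕ => EuclideanSpace ℂ (Fin 2)) 2)
    (hT : ∀ (x : lp (fun _ : ℕ => EuclideanSpace ℂ (Fin 2)) 2) (n : ℕ),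
      (T x) n 0 = x n 0 - ((1 : ℂ) / (n + 1)) * x n 1 ∧ (T x) n 1 = 0)
    (A : lp (fun _ : ℕ => EuclideanSpace ℂ (Fin 2)) 2 →L[ℂ]
          lp (fun _ : ℕ => EuclideanSpace ℂ (Fin 2)) 2)
    (hA : A = T * adjoint T + adjoint T * T - T - adjoint T - 1) :
    (¬ ∃ x, ‖x‖ = 1 ∧ ‖A x‖ = ‖A‖) ∧ ‖A‖ = 1 :=
  buckholtz_aux_main A
    (buckholtz_aux_An T hT (buckholtz_aux_adj T hT) A hA)
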